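/- For every integer n ≥ 1, ∑_{k=⌈n/2⌉}^{n} (-1)^k · k! · 2^{2k-n} · n! / ((2k-n)! · (n-k)!) = (-1)^n · (n+1)!. -/

import Mathlib

private def Fq (n : ℕ) : ℚ :=
  ∑ j ∈ Finset.range (n + 1), (-1 : ℚ) ^ j * ((n - j).choose j) * 2 ^ (n - 2 * j)

private lemma Fq_rec (n : ℕ) : Fq (n + 2) = 2 * Fq (n + 1) - Fq n := by
  have hF2 : Fq (n + 2) =
      (∑ i ∈ Finset.range (n + 2),
        (-1 : ℚ) ^ (i+1) * ((n + 1 - i).choose (i+1)) * 2 ^ (n - 2 * i)) + 2 ^ (n + 2) := by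
    rw [Fq, Finset.sum_range_succ']
    congr 1
    · apply Finset.sum_congr rfl
      intro i _
      have e1 : n + 2 - (i + 1) = n + 1 - i := by omega
      have e2 : n + 2 - 2 * (i + 1) = n - 2 * i := by omega
      rw [e1, e2]
    · norm_num
  -- split each term via Pascal
  have hsplit : ∀ i ∈ Finset.range (n + 2),
      (-1 : ℚ) ^ (i+1) * ((n + 1 - i).choose (i+1)) * 2 ^ (n - 2 * i)
      = -((-1 : ℚ) ^ i * ((n - i).choose (i+1)) * 2 ^ (n - 2 * i))
        - ((-1 : ℚ) ^ i * ((n - i).choose i) * 2 ^ (n - 2 * i)) := by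
    intro i hi
    rcases le_or_gt i n with h | h
    · have : n + 1 - i = (n - i) + 1 := by omega
      rw [this, Nat.choose_succ_succ]
      push_cast
      ring
    · have h1 : i = n + 1 := by simp at hi; omega
      subst h1
      have e1 : n + 1 - (n + 1) = 0 := by omega
      have e2 : n - (n + 1) = 0 := by omega
      rw [e1, e2]
      simp [Nat.choose_eq_zero_of_lt]
  rw [Finset.sum_congr rfl hsplit] at hF2
  rw [Finset.sum_sub_distrib] at hF2
  -- second summand is Fq n
  have hFn : (∑ i ∈ Finset.range (n + 2),
      (-1 : ℚ) ^ i * ((n - i).choose i) * 2 ^ (n - 2 * i)) = Fq n := by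
    rw [Fq, Finset.sum_range_succ]
    have : ((n - (n+1)).choose (n+1) : ℚ) = 0 := by
      have : n - (n+1) = 0 := by omega
      rw [this]; simp [Nat.choose_eq_zero_of_lt]
    rw [this]; ring
  rw [hFn] at hF2
  -- first summand relates to Fq (n+1)
  have hF1 : Fq (n + 1) =
      (∑ i ∈ Finset.range (n + 1),
        (-1 : ℚ) ^ (i+1) * ((n - i).choose (i+1)) * 2 ^ (n - 1 - 2 * i)) + 2 ^ (n + 1) := by
    rw [Fq, Finset.sum_range_succ']
    congr 1
    · apply Finset.sum_congr rfl
      intro i _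
      have e1 : n + 1 - (i + 1) = n - i := by omega
      have e2 : n + 1 - 2 * (i + 1) = n - 1 - 2 * i := by omega
      rw [e1, e2]
    · norm_num
  have hdouble : (∑ i ∈ Finset.range (n + 2),
      -((-1 : ℚ) ^ i * ((n - i).choose (i+1)) * 2 ^ (n - 2 * i)))
      = 2 * ∑ i ∈ Finset.range (n + 1),
        (-1 : ℚ) ^ (i+1) * ((n - i).choose (i+1)) * 2 ^ (n - 1 - 2 * i) := by
    rw [Finset.sum_range_succ]
    have hz : ((n - (n+1)).choose (n+1+1) : ℚ) = 0 := by
      have : n - (n+1) = 0 := by omega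
      rw [this]; simp [Nat.choose_eq_zero_of_lt]
    rw [hz, Finset.mul_sum]
    simp only [mul_zero, zero_mul, neg_zero, add_zero]
    apply Finset.sum_congr rfl
    intro i _
    rcases le_or_gt (2 * i + 1) n with h | h
    · have : n - 2 * i = (n - 1 - 2 * i) + 1 := by omega
      rw [this, pow_succ, pow_succ]
      ring
    · have : ((n - i).choose (i+1) : ℚ) = 0 := by
        have : n - i < i + 1 := by omega
        simp [Nat.choose_eq_zero_of_lt this]
      rw [this]; ring
  rw [hdouble] at hF2
  have := hF1
  rw [hF2]
  have hsum : (∑ i ∈ Finset.range (n + 1),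
      (-1 : ℚ) ^ (i+1) * ((n - i).choose (i+1)) * 2 ^ (n - 1 - 2 * i))
      = Fq (n + 1) - 2 ^ (n + 1) := by rw [hF1]; ring
  rw [hsum]
  have : (2 : ℚ) ^ (n + 2) = 2 * 2 ^ (n + 1) := by ring
  rw [this]
  ring

private lemma Fq_eq (n : ℕ) : Fq n = n + 1 := by
  induction n using Nat.twoStepInduction with
  | zero => simp [Fq]
  | one => norm_num [Fq, Finset.sum_range_succ]
  | more n ih1 ih2 =>
    rw [Fq_rec, ih1, ih2]
    push_cast
    ring

theorem stmt_15 (n : ℕ) (hn : 1 ≤ n) :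
    ∑ k ∈ Finset.Icc ((n + 1) / 2) n,
      (-1 : ℚ) ^ k * k.factorial * 2 ^ (2 * k - n) * n.factorial
        / ((2 * k - n).factorial * (n - k).factorial)
      = (-1 : ℚ) ^ n * (n + 1).factorial := by
  have hreindex : ∑ k ∈ Finset.Icc ((n + 1) / 2) n,
      (-1 : ℚ) ^ k * k.factorial * 2 ^ (2 * k - n) * n.factorial
        / ((2 * k - n).factorial * (n - k).factorial)
      = ∑ j ∈ Finset.range (n / 2 + 1),
      (-1 : ℚ) ^ (n - j) * (n - j).factorial * 2 ^ (2 * (n - j) - n) * n.factorial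
        / ((2 * (n - j) - n).factorial * (n - (n - j)).factorial) := by
    apply Finset.sum_nbij' (fun k => n - k) (fun j => n - j)
    · intro k hk; simp only [Finset.mem_Icc] at hk; simp only [Finset.mem_range]; omega
    · intro j hj; simp only [Finset.mem_range] at hj; simp only [Finset.mem_Icc]; omega
    · intro k hk; simp only [Finset.mem_Icc] at hk; omega
    · intro j hj; simp only [Finset.mem_range] at hj; omega
    · intro k hk; simp only [Finset.mem_Icc] at hk
      have : n - (n - k) = k := by omega
      rw [this]
  rw [hreindex]
  have hterm : ∀ j ∈ Finset.range (n / 2 + 1),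
      (-1 : ℚ) ^ (n - j) * (n - j).factorial * 2 ^ (2 * (n - j) - n) * n.factorial
        / ((2 * (n - j) - n).factorial * (n - (n - j)).factorial)
      = (-1 : ℚ) ^ n * n.factorial *
        ((-1 : ℚ) ^ j * ((n - j).choose j) * 2 ^ (n - 2 * j)) := by
    intro j hj
    simp only [Finset.mem_range] at hj
    have h2j : 2 * j ≤ n := by omega
    have e1 : 2 * (n - j) - n = n - 2 * j := by omega
    have e2 : n - (n - j) = j := by omega
    rw [e1, e2]
    have hfac : (n - j).factorial = (n - j).choose j * (j.factorial * (n - 2 * j).factorial) := by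
      have h := Nat.choose_mul_factorial_mul_factorial (show j ≤ n - j by omega)
      have : n - j - j = n - 2 * j := by omega
      rw [this] at h
      rw [← h]; ring
    have hsign : ((-1 : ℚ) ^ (n - j)) = (-1) ^ n * (-1) ^ j := by
      have h1 : ((-1:ℚ)) ^ (n - j) * (-1) ^ j = (-1) ^ n := by
        rw [← pow_add]; congr 1; omega
      have h2 : ((-1:ℚ)) ^ j * (-1) ^ j = 1 := by
        rw [← pow_add, show j + j = 2 * j from by ring, pow_mul]; norm_num
      calc ((-1:ℚ)) ^ (n - j) = (-1) ^ (n - j) * ((-1) ^ j * (-1) ^ j) := by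
            rw [h2, mul_one]
        _ = ((-1) ^ (n - j) * (-1) ^ j) * (-1) ^ j := by ring
        _ = (-1) ^ n * (-1) ^ j := by rw [h1]
    rw [hsign, hfac]
    have hz1 : ((n - 2*j).factorial : ℚ) ≠ 0 := by positivity
    have hz2 : ((j).factorial : ℚ) ≠ 0 := by positivity
    push_cast
    field_simp
  rw [Finset.sum_congr rfl hterm, ← Finset.mul_sum]
  have hext : ∑ j ∈ Finset.range (n / 2 + 1),
      ((-1 : ℚ) ^ j * ((n - j).choose j) * 2 ^ (n - 2 * j)) = Fq n := by
    rw [Fq]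
    apply Finset.sum_subset
    · intro x hx; simp only [Finset.mem_range] at *; omega
    · intro x hx1 hx2
      simp only [Finset.mem_range] at hx1 hx2
      have : n - x < x := by omega
      simp [Nat.choose_eq_zero_of_lt this]
  rw [hext, Fq_eq]
  rw [Nat.factorial_succ]
  push_cast
  ring
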